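/- Let S be a Boolean inverse semigroup and X ⊆ S. Then (SXS)^∨, the closure under finite compatible joins of the semigroup ideal generated by X, is the smallest additive ideal of S containing X. -/
import Mathlib


/-- An inverse semigroup with zero: associative multiplication, unique
generalized inverses, and a multiplicatively absorbing zero. -/
structure InvSemigroupZero (S : Type*) [Mul S] [Inv S] [Zero S] : Prop where
  mul_assoc : ∀ a b c : S, a * b * c = a * (b * c)
  mul_inv_mul : ∀ a : S, a * a⁻¹ * a = a
  inv_mul_inv : ∀ a : S, a⁻¹ * a * a⁻¹ = a⁻¹
  inv_unique : ∀ a t : S, a * t * a = a → t * a * t = t → t = a⁻¹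
  zero_mul : ∀ a : S, 0 * a = 0
  mul_zero : ∀ a : S, a * 0 = 0

def IsIdem {S : Type*} [Mul S] (e : S) : Prop := e * e = e

/-- The natural partial order: `s ≤ t` iff `s = t e` for some idempotent `e`. -/
def natLe {S : Type*} [Mul S] (s t : S) : Prop := ∃ e : S, IsIdem e ∧ s = t * e

/-- `s` and `t` are compatible iff `s⁻¹ t` and `s t⁻¹` are idempotents. -/
def Compat {S : Type*} [Mul S] [Inv S] (s t : S) : Prop :=
  IsIdem (s⁻¹ * t) ∧ IsIdem (s * t⁻¹)

/-- A Boolean inverse semigroup: an inverse semigroup with zero in which `⊔`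
gives the join of any compatible pair, multiplication distributes over such
joins, and `\` gives relative complements (so the idempotents form a
generalized Boolean algebra). -/
structure BooleanInvSemigroup (S : Type*) [Mul S] [Inv S] [Zero S] [Max S] [SDiff S] :
    Prop where
  toInvSemigroupZero : InvSemigroupZero S
  le_sup_left : ∀ a b : S, Compat a b → natLe a (a ⊔ b)
  le_sup_right : ∀ a b : S, Compat a b → natLe b (a ⊔ b)
  sup_le : ∀ a b c : S, Compat a b → natLe a c → natLe b c → natLe (a ⊔ b) c
  mul_sup : ∀ a b c : S, Compat b c → a * (b ⊔ c) = (a * b) ⊔ (a * c)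
  sup_mul : ∀ a b c : S, Compat a b → (a ⊔ b) * c = (a * c) ⊔ (b * c)
  sdiff_le : ∀ a c : S, natLe c a → natLe (a \ c) a
  sdiff_orth : ∀ a c : S, natLe c a → c⁻¹ * (a \ c) = 0 ∧ c * (a \ c)⁻¹ = 0
  sup_sdiff : ∀ a c : S, natLe c a → c ⊔ (a \ c) = a

def dd {S : Type*} [Mul S] [Inv S] (a : S) : S := a⁻¹ * a
def rr {S : Type*} [Mul S] [Inv S] (a : S) : S := a * a⁻¹

/-- The (left) skew difference `a ⊖ b = f a e` where `e = d(a) \ d(a)d(b)` and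
`f = r(b) \ r(a)r(b)`. -/
def skewDiff {S : Type*} [Mul S] [Inv S] [SDiff S] (a b : S) : S :=
  (rr b \ (rr a * rr b)) * a * (dd a \ (dd a * dd b))

/-- The (left) skew join `a ▽ b = (a ⊖ b) ∨ b`. -/
def skewJoin {S : Type*} [Mul S] [Inv S] [SDiff S] [Max S] (a b : S) : S :=
  skewDiff a b ⊔ b

/-- An additive ideal: a two-sided semigroup ideal closed under binary
compatible joins. -/
def AddIdeal {S : Type*} [Mul S] [Inv S] [Max S] (I : Set S) : Prop :=
  (∀ a ∈ I, ∀ s : S, s * a ∈ I ∧ a * s ∈ I) ∧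
    ∀ a ∈ I, ∀ b ∈ I, Compat a b → a ⊔ b ∈ I

/-- The semigroup ideal `SXS` generated by `X`. -/
def sandwich {S : Type*} [Mul S] (X : Set S) : Set S :=
  {y | ∃ s x t : S, x ∈ X ∧ y = s * x * t}

/-- `Y^∨`: the set of joins of finite nonempty compatible subsets of `Y`. -/
def joinClosure {S : Type*} [Mul S] [Inv S] (Y : Set S) : Set S :=
  {a | ∃ F : Finset S, F.Nonempty ∧ ↑F ⊆ Y ∧ (∀ x ∈ F, ∀ y ∈ F, Compat x y) ∧
        (∀ x ∈ F, natLe x a) ∧ ∀ c : S, (∀ x ∈ F, natLe x c) → natLe a c}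

set_option linter.unusedSectionVars false

namespace BISaux
variable {S : Type*} [Mul S] [Inv S] [Zero S]

theorem inv_inv (h : InvSemigroupZero S) (a : S) : a⁻¹⁻¹ = a :=
  ((h.inv_unique a⁻¹ a (h.inv_mul_inv a) (h.mul_inv_mul a))).symm

theorem idem_inv (h : InvSemigroupZero S) {e : S} (he : IsIdem e) : e⁻¹ = e :=
  (h.inv_unique e e (by rw [he, he]) (by rw [he, he])).symm

theorem idem_dd (h : InvSemigroupZero S) (a : S) : IsIdem (a⁻¹ * a) := by
  unfold IsIdem
  calc a⁻¹ * a * (a⁻¹ * a) = a⁻¹ * a * a⁻¹ * a := by simp only [h.mul_assoc]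
    _ = a⁻¹ * a := by rw [h.inv_mul_inv]

theorem idem_rr (h : InvSemigroupZero S) (a : S) : IsIdem (a * a⁻¹) := by
  unfold IsIdem
  calc a * a⁻¹ * (a * a⁻¹) = a * a⁻¹ * a * a⁻¹ := by simp only [h.mul_assoc]
    _ = a * a⁻¹ := by rw [h.mul_inv_mul]

theorem mul_idem (h : InvSemigroupZero S) {e f : S} (he : IsIdem e) (hf : IsIdem f) :
    IsIdem (e * f) := by
  set g := (e * f)⁻¹ with hg
  have key : e * f * g * (e * f) = e * f := h.mul_inv_mul (e * f)
  have key2 : g * (e * f) * g = g := h.inv_mul_inv (e * f)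
  have hfge : f * g * e = g := by
    refine h.inv_unique (e * f) (f * g * e) ?_ ?_
    · calc e * f * (f * g * e) * (e * f)
          = e * (f * f) * g * (e * e) * f := by simp only [h.mul_assoc]
        _ = e * f * g * (e * f) := by rw [he, hf]; simp only [h.mul_assoc]
        _ = e * f := key
    · calc f * g * e * (e * f) * (f * g * e)
          = f * ((g * ((e * e) * ((f * f) * (g * e))))) := by simp only [h.mul_assoc]
        _ = f * ((g * (e * f) * g) * e) := by rw [he, hf]; simp only [h.mul_assoc]
        _ = f * g * e := by rw [key2]; simp only [h.mul_assoc]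
  have hgidem : IsIdem g := by
    unfold IsIdem
    calc g * g = (f * g * e) * (f * g * e) := by rw [hfge]
      _ = f * ((g * (e * f) * g) * e) := by simp only [h.mul_assoc]
      _ = f * g * e := by rw [key2]; simp only [h.mul_assoc]
      _ = g := hfge
  have hef : e * f = g := by
    have := idem_inv h hgidem
    rw [hg, inv_inv h] at this
    rw [hg]; exact this
  rw [hef]; exact hgidem

theorem idem_comm (h : InvSemigroupZero S) {e f : S} (he : IsIdem e) (hf : IsIdem f) :
    e * f = f * e := by
  have hef := mul_idem h he hf
  have hfe := mul_idem h hf he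
  have : f * e = (e * f)⁻¹ := by
    refine h.inv_unique (e * f) (f * e) ?_ ?_
    · calc e * f * (f * e) * (e * f) = e * (f * f) * (e * e) * f := by simp only [h.mul_assoc]
        _ = (e * f) * (e * f) := by rw [he, hf]; simp only [h.mul_assoc]
        _ = e * f := hef
    · calc f * e * (e * f) * (f * e) = f * (e * e) * (f * f) * e := by simp only [h.mul_assoc]
        _ = (f * e) * (f * e) := by rw [he, hf]; simp only [h.mul_assoc]
        _ = f * e := hfe
  rw [this, idem_inv h hef]

theorem mul_inv_rev (h : InvSemigroupZero S) (a b : S) : (a * b)⁻¹ = b⁻¹ * a⁻¹ := by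
  refine (h.inv_unique (a * b) (b⁻¹ * a⁻¹) ?_ ?_).symm
  · calc a * b * (b⁻¹ * a⁻¹) * (a * b)
        = a * ((b * b⁻¹) * ((a⁻¹ * a) * b)) := by simp only [h.mul_assoc]
      _ = a * ((a⁻¹ * a) * ((b * b⁻¹) * b)) := by
          rw [← h.mul_assoc (b*b⁻¹), idem_comm h (idem_rr h b) (idem_dd h a), h.mul_assoc]
      _ = a * a⁻¹ * a * (b * b⁻¹ * b) := by simp only [h.mul_assoc]
      _ = a * b := by rw [h.mul_inv_mul, h.mul_inv_mul]
  · calc b⁻¹ * a⁻¹ * (a * b) * (b⁻¹ * a⁻¹)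
        = b⁻¹ * ((a⁻¹ * a) * ((b * b⁻¹) * a⁻¹)) := by simp only [h.mul_assoc]
      _ = b⁻¹ * ((b * b⁻¹) * ((a⁻¹ * a) * a⁻¹)) := by
          rw [← h.mul_assoc (a⁻¹*a), idem_comm h (idem_dd h a) (idem_rr h b), h.mul_assoc]
      _ = b⁻¹ * b * b⁻¹ * (a⁻¹ * a * a⁻¹) := by simp only [h.mul_assoc]
      _ = b⁻¹ * a⁻¹ := by rw [h.inv_mul_inv, h.inv_mul_inv]

theorem idem_conj (h : InvSemigroupZero S) (s : S) {e : S} (he : IsIdem e) :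
    IsIdem (s * e * s⁻¹) := by
  unfold IsIdem
  calc s * e * s⁻¹ * (s * e * s⁻¹)
      = s * (e * (s⁻¹ * s) * (e * s⁻¹)) := by simp only [h.mul_assoc]
    _ = s * ((s⁻¹ * s) * e * (e * s⁻¹)) := by rw [idem_comm h he (idem_dd h s)]
    _ = s * s⁻¹ * s * ((e * e) * s⁻¹) := by simp only [h.mul_assoc]
    _ = s * (e * s⁻¹) := by rw [h.mul_inv_mul, he]
    _ = s * e * s⁻¹ := by rw [h.mul_assoc]

theorem idem_conj' (h : InvSemigroupZero S) (s : S) {e : S} (he : IsIdem e) :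
    IsIdem (s⁻¹ * e * s) := by
  have := idem_conj h s⁻¹ he
  rwa [inv_inv h] at this

end BISaux

namespace BISaux
variable {S : Type*} [Mul S] [Inv S] [Zero S]

theorem le_refl (h : InvSemigroupZero S) (a : S) : natLe a a :=
  ⟨a⁻¹ * a, idem_dd h a, by rw [← h.mul_assoc, h.mul_inv_mul]⟩

theorem le_canon (h : InvSemigroupZero S) {s t : S} (hst : natLe s t) :
    s = t * (s⁻¹ * s) := by
  obtain ⟨e, he, rfl⟩ := hst
  rw [mul_inv_rev h, idem_inv h he]
  calc t * e = t * t⁻¹ * t * (e * e) := by rw [h.mul_inv_mul, he]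
    _ = t * ((t⁻¹ * t) * e * e) := by simp only [h.mul_assoc]
    _ = t * (e * (t⁻¹ * t) * e) := by rw [idem_comm h (idem_dd h t) he]
    _ = t * (e * t⁻¹ * (t * e)) := by simp only [h.mul_assoc]

theorem le_antisymm (h : InvSemigroupZero S) {s t : S} (h1 : natLe s t) (h2 : natLe t s) :
    s = t := by
  have c1 := le_canon h h1
  have c2 := le_canon h h2
  -- t = s * (t⁻¹ t) = t * (s⁻¹ s) * (t⁻¹ t) = t * (t⁻¹ t) * (s⁻¹ s) = t * (s⁻¹ s)... 
  calc s = t * (s⁻¹ * s) := c1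
    _ = s * (t⁻¹ * t) * (s⁻¹ * s) := by rw [← c2]
    _ = s * ((t⁻¹ * t) * (s⁻¹ * s)) := by rw [h.mul_assoc]
    _ = s * ((s⁻¹ * s) * (t⁻¹ * t)) := by rw [idem_comm h (idem_dd h t) (idem_dd h s)]
    _ = s * s⁻¹ * s * (t⁻¹ * t) := by simp only [h.mul_assoc]
    _ = s * (t⁻¹ * t) := by rw [h.mul_inv_mul]
    _ = t := c2.symm

theorem le_trans (h : InvSemigroupZero S) {s t u : S} (h1 : natLe s t) (h2 : natLe t u) :
    natLe s u := by
  obtain ⟨e, he, rfl⟩ := h1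
  obtain ⟨f, hf, rfl⟩ := h2
  exact ⟨f * e, mul_idem h hf he, by rw [h.mul_assoc]⟩

theorem mul_le_left (h : InvSemigroupZero S) {s t : S} (u : S) (hst : natLe s t) :
    natLe (u * s) (u * t) := by
  obtain ⟨e, he, rfl⟩ := hst
  exact ⟨e, he, by rw [h.mul_assoc]⟩

theorem mul_le_right (h : InvSemigroupZero S) {s t : S} (u : S) (hst : natLe s t) :
    natLe (s * u) (t * u) := by
  obtain ⟨e, he, rfl⟩ := hst
  refine ⟨u⁻¹ * e * u, idem_conj' h u he, ?_⟩
  have key : t * u * (u⁻¹ * e * u) = t * e * u :=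
    calc t * u * (u⁻¹ * e * u)
        = t * ((u * u⁻¹) * e * u) := by simp only [h.mul_assoc]
      _ = t * (e * (u * u⁻¹) * u) := by rw [idem_comm h (idem_rr h u) he]
      _ = t * (e * (u * u⁻¹ * u)) := by simp only [h.mul_assoc]
      _ = t * (e * u) := by rw [h.mul_inv_mul]
      _ = t * e * u := (h.mul_assoc t e u).symm
  exact key.symm

theorem compat_of_le_le (h : InvSemigroupZero S) {u v c : S} (hu : natLe u c) (hv : natLe v c) :
    Compat u v := by
  obtain ⟨e, he, rfl⟩ := hu
  obtain ⟨f, hf, rfl⟩ := hv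
  constructor
  · -- (c e)⁻¹ (c f) = e (c⁻¹ c) f idempotent
    have : (c * e)⁻¹ * (c * f) = e * (c⁻¹ * c) * f := by
      rw [mul_inv_rev h, idem_inv h he]; simp only [h.mul_assoc]
    rw [this]
    exact mul_idem h (mul_idem h he (idem_dd h c)) hf
  · have : (c * e) * (c * f)⁻¹ = c * (e * f) * c⁻¹ := by
      rw [mul_inv_rev h, idem_inv h hf]; simp only [h.mul_assoc]
    rw [this]
    exact idem_conj h c (mul_idem h he hf)

theorem compat_mul_left (h : InvSemigroupZero S) {a b : S} (s : S) (hab : Compat a b) :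
    Compat (s * a) (s * b) := by
  obtain ⟨h1, h2⟩ := hab
  constructor
  · have key : (a⁻¹ * (s⁻¹ * s) * a) * (a⁻¹ * b) = (s * a)⁻¹ * (s * b) :=
      calc (a⁻¹ * (s⁻¹ * s) * a) * (a⁻¹ * b)
          = a⁻¹ * ((s⁻¹ * s) * (a * a⁻¹) * b) := by simp only [h.mul_assoc]
        _ = a⁻¹ * ((a * a⁻¹) * (s⁻¹ * s) * b) := by
            rw [idem_comm h (idem_dd h s) (idem_rr h a)]
        _ = a⁻¹ * a * a⁻¹ * ((s⁻¹ * s) * b) := by simp only [h.mul_assoc]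
        _ = a⁻¹ * ((s⁻¹ * s) * b) := by rw [h.inv_mul_inv]
        _ = (s * a)⁻¹ * (s * b) := by rw [mul_inv_rev h]; simp only [h.mul_assoc]
    rw [← key]
    exact mul_idem h (idem_conj' h a (idem_dd h s)) h1
  · have : (s * a) * (s * b)⁻¹ = s * (a * b⁻¹) * s⁻¹ := by
      rw [mul_inv_rev h]; simp only [h.mul_assoc]
    rw [this]
    exact idem_conj h s h2

theorem compat_mul_right (h : InvSemigroupZero S) {a b : S} (s : S) (hab : Compat a b) :
    Compat (a * s) (b * s) := by
  obtain ⟨h1, h2⟩ := hab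
  constructor
  · have : (a * s)⁻¹ * (b * s) = s⁻¹ * (a⁻¹ * b) * s := by
      rw [mul_inv_rev h]; simp only [h.mul_assoc]
    rw [this]
    exact idem_conj' h s h1
  · have key : (a * b⁻¹) * (b * (s * s⁻¹) * b⁻¹) = (a * s) * (b * s)⁻¹ :=
      calc (a * b⁻¹) * (b * (s * s⁻¹) * b⁻¹)
          = a * ((b⁻¹ * b) * (s * s⁻¹) * b⁻¹) := by simp only [h.mul_assoc]
        _ = a * ((s * s⁻¹) * (b⁻¹ * b) * b⁻¹) := by
            rw [idem_comm h (idem_dd h b) (idem_rr h s)]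
        _ = a * (s * s⁻¹ * (b⁻¹ * b * b⁻¹)) := by simp only [h.mul_assoc]
        _ = a * (s * s⁻¹ * b⁻¹) := by rw [h.inv_mul_inv]
        _ = (a * s) * (b * s)⁻¹ := by rw [mul_inv_rev h]; simp only [h.mul_assoc]
    rw [← key]
    exact mul_idem h h2 (idem_conj h b (idem_rr h s))

theorem compat_refl (h : InvSemigroupZero S) (a : S) : Compat a a :=
  ⟨idem_dd h a, idem_rr h a⟩

end BISaux

namespace BISaux
variable {S : Type*} [Mul S] [Inv S] [Zero S] [Max S] [SDiff S]

/-- compat from bounds under compatible elements -/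
theorem compat_of_le_le' (h : InvSemigroupZero S) {p q a b : S}
    (hp : natLe p a) (hq : natLe q b) (hab : Compat a b) : Compat p q := by
  obtain ⟨e, he, rfl⟩ := hp
  obtain ⟨f, hf, rfl⟩ := hq
  obtain ⟨h1, h2⟩ := hab
  constructor
  · have key : (e * (a⁻¹ * b)) * f = (a * e)⁻¹ * (b * f) := by
      rw [mul_inv_rev h, idem_inv h he]; simp only [h.mul_assoc]
    rw [← key]
    exact mul_idem h (mul_idem h he h1) hf
  · have key : (a * (e * f) * a⁻¹) * (a * b⁻¹) = (a * e) * (b * f)⁻¹ :=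
      calc (a * (e * f) * a⁻¹) * (a * b⁻¹)
          = a * ((e * f) * (a⁻¹ * a) * b⁻¹) := by simp only [h.mul_assoc]
        _ = a * ((a⁻¹ * a) * (e * f) * b⁻¹) := by
            rw [idem_comm h (mul_idem h he hf) (idem_dd h a)]
        _ = a * a⁻¹ * a * ((e * f) * b⁻¹) := by simp only [h.mul_assoc]
        _ = a * ((e * f) * b⁻¹) := by rw [h.mul_inv_mul]
        _ = (a * e) * (b * f)⁻¹ := by
            rw [mul_inv_rev h, idem_inv h hf]; simp only [h.mul_assoc]
    rw [← key]
    exact mul_idem h (idem_conj h a (mul_idem h he hf)) h2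

def supl (L : List S) (x : S) : S := L.foldr (· ⊔ ·) x

theorem supl_bounds (hB : BooleanInvSemigroup S) {c : S} :
    ∀ (L : List S) (x : S), natLe x c → (∀ y ∈ L, natLe y c) →
      natLe x (supl L x) ∧ (∀ y ∈ L, natLe y (supl L x)) ∧ natLe (supl L x) c := by
  have h := hB.toInvSemigroupZero
  intro L
  induction L with
  | nil => intro x hx _; exact ⟨le_refl h x, by simp, hx⟩
  | cons y L ih =>
    intro x hx hL
    have hyc : natLe y c := hL y (by simp)
    have hLc : ∀ z ∈ L, natLe z c := fun z hz => hL z (by simp [hz])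
    obtain ⟨h1, h2, h3⟩ := ih x hx hLc
    have hcompat : Compat y (supl L x) := compat_of_le_le h hyc h3
    have hsup : supl (y :: L) x = y ⊔ supl L x := rfl
    have hy_le : natLe y (supl (y :: L) x) := by
      rw [hsup]; exact hB.le_sup_left y (supl L x) hcompat
    have hs_le : natLe (supl L x) (supl (y :: L) x) := by
      rw [hsup]; exact hB.le_sup_right y (supl L x) hcompat
    refine ⟨le_trans h h1 hs_le, ?_, ?_⟩
    · intro z hz
      rcases List.mem_cons.mp hz with rfl | hz
      · exact hy_le
      · exact le_trans h (h2 z hz) hs_le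
    · rw [hsup]; exact hB.sup_le y (supl L x) c hcompat hyc h3

theorem supl_mul_left (hB : BooleanInvSemigroup S) {c : S} :
    ∀ (L : List S) (x : S), natLe x c → (∀ y ∈ L, natLe y c) →
      ∀ s : S, s * supl L x = supl (L.map (s * ·)) (s * x) := by
  have h := hB.toInvSemigroupZero
  intro L
  induction L with
  | nil => intro x _ _ s; rfl
  | cons y L ih =>
    intro x hx hL s
    have hyc : natLe y c := hL y (by simp)
    have hLc : ∀ z ∈ L, natLe z c := fun z hz => hL z (by simp [hz])
    obtain ⟨-, -, h3⟩ := supl_bounds hB L x hx hLc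
    have hcompat : Compat y (supl L x) := compat_of_le_le h hyc h3
    show s * (y ⊔ supl L x) = (s * y) ⊔ supl (L.map (s * ·)) (s * x)
    rw [hB.mul_sup s y (supl L x) hcompat, ih x hx hLc s]

theorem supl_mul_right (hB : BooleanInvSemigroup S) {c : S} :
    ∀ (L : List S) (x : S), natLe x c → (∀ y ∈ L, natLe y c) →
      ∀ s : S, supl L x * s = supl (L.map (· * s)) (x * s) := by
  have h := hB.toInvSemigroupZero
  intro L
  induction L with
  | nil => intro x _ _ s; rfl
  | cons y L ih =>
    intro x hx hL s
    have hyc : natLe y c := hL y (by simp)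
    have hLc : ∀ z ∈ L, natLe z c := fun z hz => hL z (by simp [hz])
    obtain ⟨-, -, h3⟩ := supl_bounds hB L x hx hLc
    have hcompat : Compat y (supl L x) := compat_of_le_le h hyc h3
    show (y ⊔ supl L x) * s = (y * s) ⊔ supl (L.map (· * s)) (x * s)
    rw [hB.sup_mul y (supl L x) s hcompat, ih x hx hLc s]

theorem supl_mem (hB : BooleanInvSemigroup S) {I : Set S}
    (hI : ∀ a ∈ I, ∀ b ∈ I, Compat a b → a ⊔ b ∈ I) {c : S} :
    ∀ (L : List S) (x : S), natLe x c → (∀ y ∈ L, natLe y c) →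
      x ∈ I → (∀ y ∈ L, y ∈ I) → supl L x ∈ I := by
  have h := hB.toInvSemigroupZero
  intro L
  induction L with
  | nil => intro x _ _ hxI _; exact hxI
  | cons y L ih =>
    intro x hx hL hxI hLI
    have hyc : natLe y c := hL y (by simp)
    have hLc : ∀ z ∈ L, natLe z c := fun z hz => hL z (by simp [hz])
    obtain ⟨-, -, h3⟩ := supl_bounds hB L x hx hLc
    have hcompat : Compat y (supl L x) := compat_of_le_le h hyc h3
    have : supl L x ∈ I := ih x hx hLc hxI (fun z hz => hLI z (by simp [hz]))
    exact hI y (hLI y (by simp)) (supl L x) this hcompat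

end BISaux

namespace BISaux
variable {S : Type*} [Mul S] [Inv S] [Zero S] [Max S] [SDiff S]

omit [Max S] [SDiff S] in
theorem compat_symm (h : InvSemigroupZero S) {a b : S} (hab : Compat a b) : Compat b a := by
  obtain ⟨h1, h2⟩ := hab
  constructor
  · have : b⁻¹ * a = (a⁻¹ * b)⁻¹ := by rw [mul_inv_rev h, inv_inv h]
    rw [this, idem_inv h h1]; exact h1
  · have : b * a⁻¹ = (a * b⁻¹)⁻¹ := by rw [mul_inv_rev h, inv_inv h]
    rw [this, idem_inv h h2]; exact h2

theorem joinClosure_repr (hB : BooleanInvSemigroup S) {Y : Set S} {a : S}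
    (ha : a ∈ joinClosure Y) :
    ∃ x L, x ∈ Y ∧ (∀ y ∈ L, y ∈ Y) ∧ natLe x a ∧ (∀ y ∈ L, natLe y a) ∧ a = supl L x := by
  have h := hB.toInvSemigroupZero
  obtain ⟨F, hne, hsub, _, hub, hlub⟩ := ha
  have hnil : F.toList ≠ [] := by
    simpa [Finset.toList_eq_nil] using hne.ne_empty
  obtain ⟨x, L, hxL⟩ := List.exists_cons_of_ne_nil hnil
  have hmem : ∀ z, z ∈ F ↔ z ∈ x :: L := by
    intro z; rw [← hxL, Finset.mem_toList]
  have hxF : x ∈ F := (hmem x).mpr (by simp)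
  have hLF : ∀ y ∈ L, y ∈ F := fun y hy => (hmem y).mpr (by simp [hy])
  have hxa : natLe x a := hub x hxF
  have hLa : ∀ y ∈ L, natLe y a := fun y hy => hub y (hLF y hy)
  obtain ⟨h1, h2, h3⟩ := supl_bounds hB L x hxa hLa
  have hle : natLe a (supl L x) := by
    refine hlub (supl L x) (fun z hz => ?_)
    rcases List.mem_cons.mp ((hmem z).mp hz) with rfl | hz'
    · exact h1
    · exact h2 z hz'
  exact ⟨x, L, hsub hxF, fun y hy => hsub (hLF y hy), hxa, hLa,
    le_antisymm h hle h3⟩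

theorem jc_mul_left (hB : BooleanInvSemigroup S) {X : Set S} {a : S}
    (ha : a ∈ joinClosure (sandwich X)) (s : S) : s * a ∈ joinClosure (sandwich X) := by
  classical
  have h := hB.toInvSemigroupZero
  obtain ⟨x, L, hxY, hLY, hxa, hLa, hrepr⟩ := joinClosure_repr hB ha
  have hmemY : ∀ p ∈ x :: L, p ∈ sandwich X := by
    intro p hp; rcases List.mem_cons.mp hp with rfl | hp'
    · exact hxY
    · exact hLY p hp'
  have hmema : ∀ p ∈ x :: L, natLe p a := by
    intro p hp; rcases List.mem_cons.mp hp with rfl | hp'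
    · exact hxa
    · exact hLa p hp'
  refine ⟨((x :: L).map (s * ·)).toFinset, ⟨s * x, by simp⟩, ?_, ?_, ?_, ?_⟩
  · intro z hz
    rw [Finset.mem_coe, List.mem_toFinset, List.mem_map] at hz
    obtain ⟨p, hp, rfl⟩ := hz
    obtain ⟨u, w, v, hw, rfl⟩ := hmemY p hp
    exact ⟨s * u, w, v, hw, by simp only [h.mul_assoc]⟩
  · intro z1 hz1 z2 hz2
    rw [List.mem_toFinset, List.mem_map] at hz1 hz2
    obtain ⟨p, hp, rfl⟩ := hz1
    obtain ⟨q, hq, rfl⟩ := hz2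
    exact compat_mul_left h s (compat_of_le_le h (hmema p hp) (hmema q hq))
  · intro z hz
    rw [List.mem_toFinset, List.mem_map] at hz
    obtain ⟨p, hp, rfl⟩ := hz
    exact mul_le_left h s (hmema p hp)
  · intro c hc
    have hmul : s * a = supl (L.map (s * ·)) (s * x) := by
      rw [hrepr, supl_mul_left hB L x hxa hLa s]
    rw [hmul]
    refine (supl_bounds hB (L.map (s * ·)) (s * x)
      (hc (s * x) (by simp)) (fun z hz => hc z ?_)).2.2
    rw [List.mem_toFinset]
    simp only [List.map_cons, List.mem_cons]
    exact Or.inr hz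

theorem jc_mul_right (hB : BooleanInvSemigroup S) {X : Set S} {a : S}
    (ha : a ∈ joinClosure (sandwich X)) (s : S) : a * s ∈ joinClosure (sandwich X) := by
  classical
  have h := hB.toInvSemigroupZero
  obtain ⟨x, L, hxY, hLY, hxa, hLa, hrepr⟩ := joinClosure_repr hB ha
  have hmemY : ∀ p ∈ x :: L, p ∈ sandwich X := by
    intro p hp; rcases List.mem_cons.mp hp with rfl | hp'
    · exact hxY
    · exact hLY p hp'
  have hmema : ∀ p ∈ x :: L, natLe p a := by
    intro p hp; rcases List.mem_cons.mp hp with rfl | hp'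
    · exact hxa
    · exact hLa p hp'
  refine ⟨((x :: L).map (· * s)).toFinset, ⟨x * s, by simp⟩, ?_, ?_, ?_, ?_⟩
  · intro z hz
    rw [Finset.mem_coe, List.mem_toFinset, List.mem_map] at hz
    obtain ⟨p, hp, rfl⟩ := hz
    obtain ⟨u, w, v, hw, rfl⟩ := hmemY p hp
    exact ⟨u, w, v * s, hw, by simp only [h.mul_assoc]⟩
  · intro z1 hz1 z2 hz2
    rw [List.mem_toFinset, List.mem_map] at hz1 hz2
    obtain ⟨p, hp, rfl⟩ := hz1
    obtain ⟨q, hq, rfl⟩ := hz2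
    exact compat_mul_right h s (compat_of_le_le h (hmema p hp) (hmema q hq))
  · intro z hz
    rw [List.mem_toFinset, List.mem_map] at hz
    obtain ⟨p, hp, rfl⟩ := hz
    exact mul_le_right h s (hmema p hp)
  · intro c hc
    have hmul : a * s = supl (L.map (· * s)) (x * s) := by
      rw [hrepr, supl_mul_right hB L x hxa hLa s]
    rw [hmul]
    refine (supl_bounds hB (L.map (· * s)) (x * s)
      (hc (x * s) (by simp)) (fun z hz => hc z ?_)).2.2
    rw [List.mem_toFinset]
    simp only [List.map_cons, List.mem_cons]
    exact Or.inr hz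

end BISaux

/-- `(SXS)^∨` is the smallest additive ideal of `S` containing `X`. -/
theorem joinClosure_sandwich_smallest_additive_ideal {S : Type*}
    [Mul S] [Inv S] [Zero S] [Max S] [SDiff S]
    (hS : BooleanInvSemigroup S) (X : Set S) :
    AddIdeal (joinClosure (sandwich X)) ∧ X ⊆ joinClosure (sandwich X) ∧
      ∀ I : Set S, AddIdeal I → X ⊆ I → joinClosure (sandwich X) ⊆ I := by
  classical
  have h := hS.toInvSemigroupZero
  refine ⟨⟨?_, ?_⟩, ?_, ?_⟩
  · intro a ha s
    exact ⟨BISaux.jc_mul_left hS ha s, BISaux.jc_mul_right hS ha s⟩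
  · -- closure under compatible joins
    intro a ha b hb hab
    obtain ⟨Fa, hane, hasub, _, haub, halub⟩ := ha
    obtain ⟨Fb, hbne, hbsub, _, hbub, hblub⟩ := hb
    refine ⟨Fa ∪ Fb, ?_, ?_, ?_, ?_, ?_⟩
    · obtain ⟨w, hw⟩ := hane; exact ⟨w, Finset.mem_union_left _ hw⟩
    · intro z hz
      rw [Finset.coe_union] at hz
      rcases hz with hz | hz
      · exact hasub hz
      · exact hbsub hz
    · intro p hp q hq
      rcases Finset.mem_union.mp hp with hp | hp <;>
        rcases Finset.mem_union.mp hq with hq | hq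
      · exact BISaux.compat_of_le_le h (haub p hp) (haub q hq)
      · exact BISaux.compat_of_le_le' h (haub p hp) (hbub q hq) hab
      · exact BISaux.compat_of_le_le' h (hbub p hp) (haub q hq)
          (BISaux.compat_symm h hab)
      · exact BISaux.compat_of_le_le h (hbub p hp) (hbub q hq)
    · intro p hp
      rcases Finset.mem_union.mp hp with hp | hp
      · exact BISaux.le_trans h (haub p hp) (hS.le_sup_left a b hab)
      · exact BISaux.le_trans h (hbub p hp) (hS.le_sup_right a b hab)
    · intro c hc
      have h1 : natLe a c := halub c (fun p hp => hc p (Finset.mem_union_left _ hp))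
      have h2 : natLe b c := hblub c (fun p hp => hc p (Finset.mem_union_right _ hp))
      exact hS.sup_le a b c hab h1 h2
  · -- X ⊆ joinClosure (sandwich X)
    intro x hx
    refine ⟨{x}, ⟨x, Finset.mem_singleton_self x⟩, ?_, ?_, ?_, ?_⟩
    · intro z hz
      rw [Finset.coe_singleton, Set.mem_singleton_iff] at hz
      refine ⟨x * x⁻¹, x, x⁻¹ * x, hx, ?_⟩
      rw [hz]
      have : x * x⁻¹ * x * (x⁻¹ * x) = x := by
        rw [h.mul_inv_mul, ← h.mul_assoc, h.mul_inv_mul]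
      exact this.symm
    · intro p hp q hq
      rw [Finset.mem_singleton] at hp hq
      rw [hp, hq]
      exact BISaux.compat_refl h x
    · intro p hp
      rw [Finset.mem_singleton] at hp
      rw [hp]
      exact BISaux.le_refl h x
    · intro c hc
      exact hc x (Finset.mem_singleton_self x)
  · -- minimality
    intro I hI hXI a ha
    obtain ⟨x, L, hxY, hLY, hxa, hLa, hrepr⟩ := BISaux.joinClosure_repr hS ha
    have hsandI : ∀ z ∈ sandwich X, z ∈ I := by
      rintro z ⟨u, w, v, hw, rfl⟩
      exact (hI.1 (u * w) ((hI.1 w (hXI hw) u).1) v).2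
    rw [hrepr]
    exact BISaux.supl_mem hS hI.2 L x hxa hLa (hsandI x hxY)
      (fun y hy => hsandI y (hLY y hy))
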